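/- The cosets of the subgroup $G = \{x \in \mathbb{F}_{81}^\times : x^{20} = 1\}$ partition $\mathbb{F}_{81}^\times$ into 4 pairwise disjoint cap sets, each of size 20. -/

import Mathlib

theorem key_cap (F : Type*) [Field F] (h3 : (3:F) = 0) (u : F)
    (h1 : u ^ 20 = 1) (h2 : (1 + u) ^ 20 = 1) : u = 1 := by
  linear_combination ((1) * 1 + (2) * u^1 + (1) * u^2 + (1) * u^8 + (2) * u^9 + (2) * u^10 + (1) * u^12 + (1) * u^13 + (2) * u^14) * h1 + ((2) * u^1 + (2) * u^2 + (2) * u^3 + (2) * u^4 + (2) * u^5 + (2) * u^6 + (1) * u^7 + (2) * u^8 + (1) * u^9 + (1) * u^10 + (1) * u^11 + (1) * u^12 + (1) * u^14) * h2 + ((1) * u^1 + (-13) * u^2 + (-140) * u^3 + (-900) * u^4 + (-4130) * u^5 + (-14466) * u^6 + (-40306) * u^7 + (-91979) * u^8 + (-175902) * u^9 + (-287552) * u^10 + (-409425) * u^11 + (-517465) * u^12 + (-592078) * u^13 + (-625663) * u^14 + (-622377) * u^15 + (-592553) * u^16 + (-546896) * u^17 + (-493335) * u^18 + (-436506) *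 u^19 + (-378595) * u^20 + (-320456) * u^21 + (-262531) * u^22 + (-205575) * u^23 + (-151254) * u^24 + (-102367) * u^25 + (-62207) * u^26 + (-33080) * u^27 + (-14986) * u^28 + (-5619) * u^29 + (-1686) * u^30 + (-387) * u^31 + (-64) * u^32 + (-7) * u^33 + (-1) * u^34) * h3

theorem stmt10 (F : Type*) [Field F] [Fintype F] (hF : Fintype.card F = 81) :
    ∃ C : Fin 4 → Set F,
      (∀ i, ∃ a : F, a ≠ 0 ∧ C i = (fun s => a * s) '' {x : F | x ^ 20 = 1}) ∧
      (∀ i j, i ≠ j → Disjoint (C i) (C j)) ∧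
      (⋃ i, C i) = {x : F | x ≠ 0} ∧
      (∀ i, (C i).ncard = 20) ∧
      (∀ i, ¬ ∃ a b c, a ∈ C i ∧ b ∈ C i ∧ c ∈ C i ∧
        a ≠ b ∧ a ≠ c ∧ b ≠ c ∧ a + b + c = 0) := by
  classical
  have h3 : (3 : F) = 0 := by
    have h81 : ((81 : ℕ) : F) = 0 := by
      rw [← hF]; exact FiniteField.cast_card_eq_zero F
    have h : (3 : F) ^ 4 = 0 := by push_cast at h81; linear_combination h81
    exact pow_eq_zero_iff (by norm_num) |>.mp h
  obtain ⟨g, hg⟩ := IsCyclic.exists_generator (α := Fˣ)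
  have horder : orderOf g = 80 := by
    rw [orderOf_eq_card_of_forall_mem_zpowers hg, Nat.card_eq_fintype_card,
      Fintype.card_units, hF]
  have hg80 : g ^ 80 = 1 := by rw [← horder]; exact pow_orderOf_eq_one g
  -- powers of units
  have hpow : ∀ n : ℕ, ((g ^ n : Fˣ) : F) = (g : F) ^ n := fun n => Units.val_pow_eq_pow_val g n
  have hpow_inj : ∀ m n : ℕ, (g : F) ^ m = (g : F) ^ n → m % 80 = n % 80 := by
    intro m n h
    have : g ^ m = g ^ n := Units.ext (by rw [hpow, hpow, h])
    have := pow_eq_pow_iff_modEq.mp this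
    rwa [horder] at this
  set G : Set F := {x : F | x ^ 20 = 1} with hG
  have hGne : ∀ x ∈ G, x ≠ 0 := by
    intro x hx h0
    rw [hG, Set.mem_setOf_eq, h0] at hx
    simp at hx
  refine ⟨fun i => (fun s => (g : F) ^ (i : ℕ) * s) '' G, ?_, ?_, ?_, ?_, ?_⟩
  · intro i
    exact ⟨(g : F) ^ (i : ℕ), pow_ne_zero _ (Units.ne_zero g), rfl⟩
  · -- disjoint
    intro i j hij
    rw [Set.disjoint_left]
    rintro w ⟨x, hx, hxw⟩ ⟨y, hy, hyw⟩
    have hx20 : x ^ 20 = 1 := hx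
    have hy20 : y ^ 20 = 1 := hy
    have h20 : (g : F) ^ (20 * (i : ℕ)) = (g : F) ^ (20 * (j : ℕ)) := by
      have : ((g : F) ^ (i : ℕ) * x) ^ 20 = ((g : F) ^ (j : ℕ) * y) ^ 20 := by
        rw [show (g : F) ^ (i : ℕ) * x = w from hxw, show (g : F) ^ (j : ℕ) * y = w from hyw]
      rw [mul_pow, mul_pow, hx20, hy20, mul_one, mul_one, ← pow_mul, ← pow_mul] at this
      rw [mul_comm 20 (i:ℕ), mul_comm 20 (j:ℕ)]; exact this
    have := hpow_inj _ _ h20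
    have hi := i.isLt
    have hj := j.isLt
    exact hij (Fin.ext (by omega))
  · -- union
    ext x
    simp only [Set.mem_iUnion, Set.mem_image, Set.mem_setOf_eq]
    constructor
    · rintro ⟨i, y, hy, rfl⟩
      exact mul_ne_zero (pow_ne_zero _ (Units.ne_zero g)) (hGne y hy)
    · intro hx
      obtain ⟨k, hk⟩ := mem_powers_iff_mem_zpowers.2 (hg (Units.mk0 x hx))
      have hxk : (g : F) ^ k = x := by
        have := congrArg (Units.val) hk
        rwa [hpow] at this
      refine ⟨⟨k % 4, Nat.mod_lt _ (by norm_num)⟩, (g : F) ^ (4 * (k / 4)), ?_, ?_⟩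
      · show ((g : F) ^ (4 * (k / 4))) ^ 20 = 1
        rw [← pow_mul]
        have : 4 * (k / 4) * 20 = 80 * (k / 4) := by ring
        rw [this, pow_mul, ← hpow, hg80]
        simp
      · show (g : F) ^ ((⟨k % 4, _⟩ : Fin 4) : ℕ) * (g : F) ^ (4 * (k / 4)) = x
        rw [← pow_add, ← hxk]
        congr 1
        show (k % 4) + 4 * (k / 4) = k
        omega
  · -- ncard
    intro i
    rw [Set.ncard_image_of_injective _
      (mul_right_injective₀ (pow_ne_zero _ (Units.ne_zero g)))]
    -- G = range of f : Fin 20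
    have hGr : G = Set.range (fun j : Fin 20 => (g : F) ^ (4 * (j : ℕ))) := by
      ext x
      simp only [hG, Set.mem_setOf_eq, Set.mem_range]
      constructor
      · intro hx
        have hxne : x ≠ 0 := by
          intro h0; rw [h0] at hx; simp at hx
        obtain ⟨k, hk⟩ := mem_powers_iff_mem_zpowers.2 (hg (Units.mk0 x hxne))
        have hxk : (g : F) ^ k = x := by
          have := congrArg (Units.val) hk
          rwa [hpow] at this
        have h1 : (g : F) ^ (20 * k) = (g : F) ^ 0 := by
          rw [pow_zero, mul_comm, pow_mul, hxk, hx]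
        have h4 : (20 * k) % 80 = 0 % 80 := hpow_inj _ _ h1
        refine ⟨⟨(k / 4) % 20, Nat.mod_lt _ (by norm_num)⟩, ?_⟩
        show (g : F) ^ (4 * ((k / 4) % 20)) = x
        rw [← hxk]
        have hmod : (4 * ((k / 4) % 20)) % 80 = k % 80 := by omega
        -- g^m = g^n when m ≡ n mod 80
        have : g ^ (4 * ((k / 4) % 20)) = g ^ k := by
          rw [pow_eq_pow_iff_modEq, horder]
          exact hmod
        have := congrArg (Units.val) this
        rwa [hpow, hpow] at this
      · rintro ⟨j, rfl⟩
        show ((g : F) ^ (4 * (j : ℕ))) ^ 20 = 1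
        rw [← pow_mul]
        have : 4 * (j : ℕ) * 20 = 80 * (j : ℕ) := by ring
        rw [this, pow_mul, ← hpow, hg80]
        simp
    rw [hGr, ← Set.image_univ,
      Set.ncard_image_of_injective _ ?_, Set.ncard_univ]
    · simp
    · intro j1 j2 h
      have := hpow_inj _ _ h
      have h1 := j1.isLt
      have h2 := j2.isLt
      exact Fin.ext (by omega)
  · -- cap set
    rintro i ⟨a, b, c, ⟨p, hp, rfl⟩, ⟨q, hq, rfl⟩, ⟨r, hr, rfl⟩, hab, hac, hbc, hsum⟩
    have hp20 : p ^ 20 = 1 := hp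
    have hq20 : q ^ 20 = 1 := hq
    have hr20 : r ^ 20 = 1 := hr
    have hpne : p ≠ 0 := hGne p hp
    have hA : (g : F) ^ (i : ℕ) ≠ 0 := pow_ne_zero _ (Units.ne_zero g)
    have hpqr : p + q + r = 0 := by
      have hsum' : (g : F) ^ (i : ℕ) * p + (g : F) ^ (i : ℕ) * q + (g : F) ^ (i : ℕ) * r = 0 :=
        hsum
      have : (g : F) ^ (i : ℕ) * (p + q + r) = 0 := by linear_combination hsum'
      exact (mul_eq_zero.mp this).resolve_left hA
    set u := q * p⁻¹ with hu
    have hu20 : u ^ 20 = 1 := by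
      have : u ^ 20 = q ^ 20 * (p ^ 20)⁻¹ := by rw [hu]; ring
      rw [this, hq20, hp20]; norm_num
    have huv : (1 + u) ^ 20 = 1 := by
      have hv : 1 + u = -(r * p⁻¹) := by
        rw [hu]; field_simp [hpne]
        linear_combination hpqr
      have : (-(r * p⁻¹)) ^ 20 = r ^ 20 * (p ^ 20)⁻¹ := by ring
      rw [hv, this, hr20, hp20]; norm_num
    have := key_cap F h3 u hu20 huv
    have hqp : q = p := by
      rw [hu] at this; field_simp [hpne] at this
      exact this
    exact hab (by rw [hqp])
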